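/- Let T = Δ be the target concept and suppose Assumption A7 holds. Fix d = 2n_δ and m ≥ d. Then for every ε ∈ (0,1): ℙ^m{(δ_1,…,δ_m) ∈ Δ^m : ℙ(δ ∈ Δ : g(x_m, δ) > 0) > ε} ≤ binom(m,d)·(1−ε)^{m−d}, where x_m is the minimizer of P_2[{δ_i}_{i=1}^m]. -/

import Mathlib

open MeasureTheory

/-- Linear objective `cᵀx`. -/
def scenObj {nx : ℕ} (c x : Fin nx → ℝ) : ℝ := ∑ j, c j * x j

/-- `x` is a minimizer of `cᵀx` over `F`. -/
def isMinimizer {nx : ℕ} (c : Fin nx → ℝ) (F : Set (Fin nx → ℝ))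
    (x : Fin nx → ℝ) : Prop :=
  x ∈ F ∧ ∀ y ∈ F, scenObj c x ≤ scenObj c y

/-- `B(p_S)`: the smallest axis-aligned hyper-rectangle containing the samples
`{δ_i}_{i∈S}`. -/
def sampleBox {nδ m : ℕ} (ω : Fin m → Fin nδ → ℝ) (S : Finset (Fin m)) :
    Set (Fin nδ → ℝ) :=
  {δ | ∀ ℓ : Fin nδ, sInf ((fun i => ω i ℓ) '' (S : Set (Fin m))) ≤ δ ℓ ∧
    δ ℓ ≤ sSup ((fun i => ω i ℓ) '' (S : Set (Fin m)))}

/-- Feasibility region of the robust problem `P₂[{δ_i}_{i∈S}]`. -/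
def robustFeas {nδ nx m : ℕ} (X : Set (Fin nx → ℝ))
    (g : (Fin nx → ℝ) → (Fin nδ → ℝ) → ℝ)
    (ω : Fin m → Fin nδ → ℝ) (S : Finset (Fin m)) : Set (Fin nx → ℝ) :=
  {x | x ∈ X ∧ ∀ δ ∈ sampleBox ω S, g x δ ≤ 0}

private lemma measure_FI_le
    (nδ : ℕ) (P : Measure (Fin nδ → ℝ)) [IsProbabilityMeasure P]
    (m : ℕ) (ε : ℝ) (hε0 : 0 < ε) (hε1 : ε < 1)
    (I : Finset (Fin m)) (hI : I.Nonempty) :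
    (Measure.pi fun _ : Fin m => P)
      {ω : Fin m → Fin nδ → ℝ | ENNReal.ofReal ε < P (sampleBox ω I)ᶜ ∧
        ∀ i ∉ I, ω i ∈ sampleBox ω I}
      ≤ ENNReal.ofReal (1 - ε) ^ (m - I.card) := by
  classical
  set p : Fin m → Prop := fun i => i ∈ I with hp
  have h1 : (Finset.univ : Finset {i // p i}).Nonempty :=
    ⟨⟨hI.choose, hI.choose_spec⟩, Finset.mem_univ _⟩
  set A : Fin nδ → ({i // p i} → (Fin nδ → ℝ)) → ℝ :=
    fun ℓ y => Finset.univ.inf' h1 (fun i => y i ℓ) with hA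
  set B : Fin nδ → ({i // p i} → (Fin nδ → ℝ)) → ℝ :=
    fun ℓ y => Finset.univ.sup' h1 (fun i => y i ℓ) with hB
  set K : ({i // p i} → (Fin nδ → ℝ)) → Set (Fin nδ → ℝ) :=
    fun y => {δ | ∀ ℓ, A ℓ y ≤ δ ℓ ∧ δ ℓ ≤ B ℓ y} with hK
  -- the box of samples in I only depends on the I-coordinates
  have himg : ∀ (ω : Fin m → Fin nδ → ℝ) (ℓ : Fin nδ),
      (fun i : {i // p i} => ω i ℓ) '' (Finset.univ : Finset {i // p i}) =
        (fun i => ω i ℓ) '' (I : Set (Fin m)) := by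
    intro ω ℓ
    ext r
    simp only [Finset.coe_univ, Set.image_univ, Set.mem_range, Set.mem_image,
      Finset.mem_coe, Subtype.exists]
    exact ⟨fun ⟨i, hi, h⟩ => ⟨i, hi, h⟩, fun ⟨i, hi, h⟩ => ⟨i, hi, h⟩⟩
  have hAeq : ∀ (ω : Fin m → Fin nδ → ℝ) (ℓ : Fin nδ),
      A ℓ (fun i : {i // p i} => ω i) = sInf ((fun i => ω i ℓ) '' (I : Set (Fin m))) := by
    intro ω ℓ
    show Finset.univ.inf' h1 (fun i : {i // p i} => ω i ℓ) = _
    rw [Finset.inf'_eq_csInf_image, himg ω ℓ]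
  have hBeq : ∀ (ω : Fin m → Fin nδ → ℝ) (ℓ : Fin nδ),
      B ℓ (fun i : {i // p i} => ω i) = sSup ((fun i => ω i ℓ) '' (I : Set (Fin m))) := by
    intro ω ℓ
    show Finset.univ.sup' h1 (fun i : {i // p i} => ω i ℓ) = _
    rw [Finset.sup'_eq_csSup_image]
    congr 1
    exact himg ω ℓ
  have hbox : ∀ ω : Fin m → Fin nδ → ℝ,
      sampleBox ω I = K (fun i : {i // p i} => ω i) := by
    intro ω
    ext δ
    show (∀ ℓ : Fin nδ, sInf ((fun i => ω i ℓ) '' (I : Set (Fin m))) ≤ δ ℓ ∧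
        δ ℓ ≤ sSup ((fun i => ω i ℓ) '' (I : Set (Fin m)))) ↔
      (∀ ℓ, A ℓ (fun i : {i // p i} => ω i) ≤ δ ℓ ∧ δ ℓ ≤ B ℓ (fun i : {i // p i} => ω i))
    refine forall_congr' fun ℓ => ?_
    rw [hAeq ω ℓ, hBeq ω ℓ]
  -- measurability
  have hAm : ∀ ℓ, Measurable fun y : {i // p i} → (Fin nδ → ℝ) => A ℓ y := by
    intro ℓ
    exact (Continuous.finset_inf'_apply h1 fun i _ =>
      (continuous_apply ℓ).comp (continuous_apply (i : {i // p i}))).measurable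
  have hBm : ∀ ℓ, Measurable fun y : {i // p i} → (Fin nδ → ℝ) => B ℓ y := by
    intro ℓ
    exact (Continuous.finset_sup'_apply h1 fun i _ =>
      (continuous_apply ℓ).comp (continuous_apply (i : {i // p i}))).measurable
  set Kset : Set (({i // p i} → (Fin nδ → ℝ)) × (Fin nδ → ℝ)) :=
    {q | ∀ ℓ, A ℓ q.1 ≤ q.2 ℓ ∧ q.2 ℓ ≤ B ℓ q.1} with hKset
  have hKsetm : MeasurableSet Kset := by
    have : Kset = ⋂ ℓ, ({q : ({i // p i} → (Fin nδ → ℝ)) × (Fin nδ → ℝ) |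
        A ℓ q.1 ≤ q.2 ℓ} ∩ {q | q.2 ℓ ≤ B ℓ q.1}) := by
      ext q; simp [hKset, forall_and]
    rw [this]
    refine MeasurableSet.iInter fun ℓ => MeasurableSet.inter ?_ ?_
    · exact measurableSet_le ((hAm ℓ).comp measurable_fst)
        measurable_snd.eval
    · exact measurableSet_le measurable_snd.eval
        ((hBm ℓ).comp measurable_fst)
  have hKy : ∀ y, MeasurableSet (K y) := by
    intro y
    have : K y = Prod.mk y ⁻¹' Kset := rfl
    rw [this]
    exact hKsetm.preimage measurable_prodMk_left
  have hφ : Measurable fun y : {i // p i} → (Fin nδ → ℝ) => P (K y)ᶜ := by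
    have : ∀ y, (K y)ᶜ = Prod.mk y ⁻¹' Ksetᶜ := fun y => rfl
    simp only [this]
    exact measurable_measure_prodMk_left hKsetm.compl
  -- the product-side event
  set G : Set (({i // p i} → (Fin nδ → ℝ)) × ({i // ¬ p i} → (Fin nδ → ℝ))) :=
    {q | ENNReal.ofReal ε < P (K q.1)ᶜ} ∩ ⋂ i : {i // ¬ p i}, {q | q.2 i ∈ K q.1}
    with hG
  have hGm : MeasurableSet G := by
    refine MeasurableSet.inter ?_ (MeasurableSet.iInter fun i => ?_)
    · exact measurableSet_lt measurable_const (hφ.comp measurable_fst)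
    · have : {q : ({i // p i} → (Fin nδ → ℝ)) × ({i // ¬ p i} → (Fin nδ → ℝ)) |
          q.2 i ∈ K q.1} = (fun q : ({i // p i} → (Fin nδ → ℝ)) ×
            ({i // ¬ p i} → (Fin nδ → ℝ)) => (q.1, q.2 i)) ⁻¹' Kset := rfl
      rw [this]
      exact hKsetm.preimage (measurable_fst.prodMk
        ((measurable_pi_apply i).comp measurable_snd))
  set e := MeasurableEquiv.piEquivPiSubtypeProd (π := fun _ : Fin m => (Fin nδ → ℝ)) p
    with he
  have hmp := measurePreserving_piEquivPiSubtypeProd (fun _ : Fin m => P) p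
  have hpre : e ⁻¹' G = {ω : Fin m → Fin nδ → ℝ | ENNReal.ofReal ε < P (sampleBox ω I)ᶜ ∧
      ∀ i ∉ I, ω i ∈ sampleBox ω I} := by
    ext ω
    have h1' : (e ω).1 = fun i : {i // p i} => ω i := rfl
    have h2' : (e ω).2 = fun i : {i // ¬ p i} => ω i := rfl
    simp only [Set.mem_preimage, hG, Set.mem_inter_iff, Set.mem_iInter,
      Set.mem_setOf_eq, h1', h2', ← hbox ω, Subtype.forall]
    exact Iff.rfl
  rw [← hpre, hmp.measure_preimage hGm.nullMeasurableSet, Measure.prod_apply hGm]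
  have hcard : Fintype.card {i // ¬ p i} = m - I.card := by
    rw [Fintype.card_subtype_compl]
    have : Fintype.card {i // p i} = I.card := by
      simp [hp, Fintype.card_subtype]
    rw [this, Fintype.card_fin]
  have hle : ∀ y : {i // p i} → (Fin nδ → ℝ),
      (Measure.pi fun _ : {i // ¬ p i} => P) (Prod.mk y ⁻¹' G) ≤
        ENNReal.ofReal (1 - ε) ^ (m - I.card) := by
    intro y
    by_cases hy : ENNReal.ofReal ε < P (K y)ᶜ
    · have hsl : Prod.mk y ⁻¹' G = Set.pi Set.univ (fun _ : {i // ¬ p i} => K y) := by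
        ext z
        simp [hG, hy, Set.mem_pi]
      rw [hsl, Measure.pi_pi]
      have hKle : P (K y) ≤ ENNReal.ofReal (1 - ε) := by
        have hcompl : P (K y) = 1 - P (K y)ᶜ := by
          have := prob_compl_eq_one_sub (μ := P) (hKy y).compl
          rwa [compl_compl] at this
        have : P (K y) ≤ 1 - ENNReal.ofReal ε := by
          rw [hcompl]
          exact tsub_le_tsub_left hy.le 1
        refine this.trans (le_of_eq ?_)
        rw [← ENNReal.ofReal_one, ← ENNReal.ofReal_sub 1 hε0.le]
      calc (∏ _i : {i // ¬ p i}, P (K y))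
          = P (K y) ^ (m - I.card) := by
            rw [Finset.prod_const, Finset.card_univ, hcard]
        _ ≤ ENNReal.ofReal (1 - ε) ^ (m - I.card) := pow_le_pow_left' hKle _
    · have : Prod.mk y ⁻¹' G = ∅ := by
        ext z
        simp [hG, hy]
      simp [this]
  refine le_trans (lintegral_mono hle) ?_
  rw [lintegral_const, measure_univ, mul_one]

private lemma box_bound (nδ : ℕ) (P : Measure (Fin nδ → ℝ)) [IsProbabilityMeasure P]
    (m : ℕ) (hm : 2 * nδ ≤ m) (ε : ℝ) (hε0 : 0 < ε) (hε1 : ε < 1) :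
    (Measure.pi fun _ : Fin m => P)
      {ω : Fin m → Fin nδ → ℝ | ENNReal.ofReal ε < P (sampleBox ω Finset.univ)ᶜ}
      ≤ ENNReal.ofReal ((m.choose (2 * nδ) : ℝ) * (1 - ε) ^ (m - 2 * nδ)) := by
  classical
  rcases Nat.eq_zero_or_pos nδ with h0 | hpos
  · subst h0
    have hempty : {ω : Fin m → Fin 0 → ℝ |
        ENNReal.ofReal ε < P (sampleBox ω Finset.univ)ᶜ} = ∅ := by
      ext ω
      have hbu : sampleBox ω Finset.univ = Set.univ := by
        ext δ
        simp [sampleBox]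
      simp [hbu, hε0]
    rw [hempty]
    simp
  · set d := 2 * nδ with hd
    have hdpos : 0 < d := by omega
    have hmpos : 0 < m := lt_of_lt_of_le hdpos hm
    have huniv_ne : (Finset.univ : Finset (Fin m)).Nonempty :=
      ⟨⟨0, hmpos⟩, Finset.mem_univ _⟩
    have hsub : {ω : Fin m → Fin nδ → ℝ |
        ENNReal.ofReal ε < P (sampleBox ω Finset.univ)ᶜ} ⊆
        ⋃ I ∈ Finset.powersetCard d (Finset.univ : Finset (Fin m)),
          {ω : Fin m → Fin nδ → ℝ | ENNReal.ofReal ε < P (sampleBox ω I)ᶜ ∧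
            ∀ i ∉ I, ω i ∈ sampleBox ω I} := by
      intro ω hω
      have hfin : ∀ ℓ : Fin nδ, ∃ i : Fin m, ∀ j : Fin m, ω i ℓ ≤ ω j ℓ := by
        intro ℓ
        obtain ⟨i, -, hi⟩ := Finset.exists_min_image Finset.univ (fun i => ω i ℓ) huniv_ne
        exact ⟨i, fun j => hi j (Finset.mem_univ _)⟩
      have hfax : ∀ ℓ : Fin nδ, ∃ i : Fin m, ∀ j : Fin m, ω j ℓ ≤ ω i ℓ := by
        intro ℓ
        obtain ⟨i, -, hi⟩ := Finset.exists_max_image Finset.univ (fun i => ω i ℓ) huniv_ne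
        exact ⟨i, fun j => hi j (Finset.mem_univ _)⟩
      choose fmin hfmin using hfin
      choose fmax hfmax using hfax
      set I0 : Finset (Fin m) :=
        Finset.image fmin Finset.univ ∪ Finset.image fmax Finset.univ with hI0
      have hI0card : I0.card ≤ d := by
        calc I0.card ≤ (Finset.image fmin Finset.univ).card +
            (Finset.image fmax Finset.univ).card := Finset.card_union_le _ _
          _ ≤ nδ + nδ := add_le_add
              (le_trans Finset.card_image_le (by simp))
              (le_trans Finset.card_image_le (by simp))
          _ = d := by omega
      obtain ⟨I, hI0I, hIuniv, hIcard⟩ :=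
        Finset.exists_subsuperset_card_eq (Finset.subset_univ I0) hI0card
          (by simpa using hm)
      have hIne : I.Nonempty := Finset.card_pos.mp (by omega)
      have hmin_mem : ∀ ℓ, fmin ℓ ∈ I := fun ℓ =>
        hI0I (Finset.mem_union_left _ (Finset.mem_image_of_mem _ (Finset.mem_univ ℓ)))
      have hmax_mem : ∀ ℓ, fmax ℓ ∈ I := fun ℓ =>
        hI0I (Finset.mem_union_right _ (Finset.mem_image_of_mem _ (Finset.mem_univ ℓ)))
      have hboxeq : sampleBox ω I = sampleBox ω Finset.univ := by
        ext δ
        refine forall_congr' fun ℓ => ?_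
        have h1 : sInf ((fun i => ω i ℓ) '' (I : Set (Fin m))) =
            sInf ((fun i => ω i ℓ) '' ((Finset.univ : Finset (Fin m)) : Set (Fin m))) := by
          rw [← Finset.inf'_eq_csInf_image I hIne,
            ← Finset.inf'_eq_csInf_image _ huniv_ne]
          refine le_antisymm ?_ (Finset.inf'_mono _ (Finset.subset_univ I) hIne)
          refine le_trans (Finset.inf'_le _ (hmin_mem ℓ)) ?_
          exact Finset.le_inf' _ _ fun j _ => hfmin ℓ j
        have h2 : sSup ((fun i => ω i ℓ) '' (I : Set (Fin m))) =
            sSup ((fun i => ω i ℓ) '' ((Finset.univ : Finset (Fin m)) : Set (Fin m))) := by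
          rw [← Finset.sup'_eq_csSup_image I hIne,
            ← Finset.sup'_eq_csSup_image _ huniv_ne]
          refine le_antisymm (Finset.sup'_mono _ (Finset.subset_univ I) hIne) ?_
          refine le_trans ?_ (Finset.le_sup' _ (hmax_mem ℓ))
          exact Finset.sup'_le _ _ fun j _ => hfmax ℓ j
        rw [h1, h2]
      have hmem_box : ∀ i : Fin m, ω i ∈ sampleBox ω Finset.univ := by
        intro i
        intro ℓ
        constructor
        · rw [← Finset.inf'_eq_csInf_image _ huniv_ne]
          exact Finset.inf'_le _ (Finset.mem_univ i)
        · rw [← Finset.sup'_eq_csSup_image _ huniv_ne]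
          exact Finset.le_sup' (fun j => ω j ℓ) (Finset.mem_univ i)
      refine Set.mem_biUnion (Finset.mem_powersetCard.mpr ⟨hIuniv, hIcard⟩) ?_
      refine ⟨by rw [hboxeq]; exact hω, fun i _ => by rw [hboxeq]; exact hmem_box i⟩
    refine le_trans (measure_mono hsub) ?_
    refine le_trans (measure_biUnion_finset_le _ _) ?_
    have hbound : ∀ I ∈ Finset.powersetCard d (Finset.univ : Finset (Fin m)),
        (Measure.pi fun _ : Fin m => P)
          {ω : Fin m → Fin nδ → ℝ | ENNReal.ofReal ε < P (sampleBox ω I)ᶜ ∧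
            ∀ i ∉ I, ω i ∈ sampleBox ω I}
          ≤ ENNReal.ofReal (1 - ε) ^ (m - d) := by
      intro I hImem
      obtain ⟨-, hIcard⟩ := Finset.mem_powersetCard.mp hImem
      have hIne : I.Nonempty := Finset.card_pos.mp (by omega)
      have := measure_FI_le nδ P m ε hε0 hε1 I hIne
      rwa [hIcard] at this
    refine le_trans (Finset.sum_le_sum hbound) ?_
    rw [Finset.sum_const, Finset.card_powersetCard, Finset.card_univ, Fintype.card_fin,
      nsmul_eq_mul]
    rw [ENNReal.ofReal_mul (by positivity), ENNReal.ofReal_pow (by linarith),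
      ENNReal.ofReal_natCast]

/-- Corollary 3, probabilistically robust design: under Assumption A7,
the minimizer `x_m` of `P₂[{δ_i}_{i=1}^m]` satisfies, with `d = 2 n_δ ≤ m` and for
every `ε ∈ (0,1)`, `ℙ^m { ℙ(g(x_m, δ) > 0) > ε } ≤ binom(m,d) (1-ε)^(m-d)`. -/
theorem robust_design_violation_bound
    (nδ nx : ℕ) (P : Measure (Fin nδ → ℝ)) [IsProbabilityMeasure P]
    (X : Set (Fin nx → ℝ)) (c : Fin nx → ℝ) (g : (Fin nx → ℝ) → (Fin nδ → ℝ) → ℝ)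
    (m : ℕ) (hm : 2 * nδ ≤ m)
    (hA7 : ∀ (ω : Fin m → Fin nδ → ℝ) (S : Finset (Fin m)),
      (interior (robustFeas X g ω S)).Nonempty ∧
        ∃! x : Fin nx → ℝ, isMinimizer c (robustFeas X g ω S) x)
    (xm : (Fin m → Fin nδ → ℝ) → (Fin nx → ℝ))
    (hxm : ∀ ω : Fin m → Fin nδ → ℝ,
      isMinimizer c (robustFeas X g ω Finset.univ) (xm ω))
    (ε : ℝ) (hε0 : 0 < ε) (hε1 : ε < 1) :
    (Measure.pi fun _ : Fin m => P)
      {ω : Fin m → Fin nδ → ℝ |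
        ENNReal.ofReal ε < P {δ : Fin nδ → ℝ | 0 < g (xm ω) δ}} ≤
      ENNReal.ofReal ((m.choose (2 * nδ) : ℝ) * (1 - ε) ^ (m - 2 * nδ)) := by
  have hsub : {ω : Fin m → Fin nδ → ℝ |
      ENNReal.ofReal ε < P {δ : Fin nδ → ℝ | 0 < g (xm ω) δ}} ⊆
      {ω : Fin m → Fin nδ → ℝ | ENNReal.ofReal ε < P (sampleBox ω Finset.univ)ᶜ} := by
    intro ω hω
    have hfeas := (hxm ω).1
    have h2 : {δ : Fin nδ → ℝ | 0 < g (xm ω) δ} ⊆ (sampleBox ω Finset.univ)ᶜ := by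
      intro δ hδ hmem
      exact absurd (hfeas.2 δ hmem) (not_le.mpr hδ)
    exact lt_of_lt_of_le hω (measure_mono h2)
  exact le_trans (measure_mono hsub) (box_bound nδ P m hm ε hε0 hε1)
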